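/- Let a, b, c, w be real numbers with a·b = c² and a + 3b ≠ 0. Set p := a − 3b, q := c, D := p² + 12q², u₁ := −4q²·w/D, u₂ := p·q·w/D. Then D = (a + 3b)² (in particular D ≠ 0), and both 7·u₁² + 8·u₂² + w² and (w − u₁)² are equal to ((a² + 9b² + 10c²)² / (a + 3b)⁴)·w². -/
import Mathlib


/-- Explicit limit computation in the classification of Lagrangian translators:
if a·b = c² and a + 3b ≠ 0, then with p := a − 3b, q := c, D := p² + 12q²,
u₁ := −4q²·w/D, u₂ := p·q·w/D, one has D = (a + 3b)², and both
7u₁² + 8u₂² + w² and (w − u₁)² equal ((a² + 9b² + 10c²)²/(a + 3b)⁴)·w². -/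
theorem translator_limit_computation (a b c w : ℝ)
    (habc : a * b = c ^ 2) (hab : a + 3 * b ≠ 0) :
    (a - 3 * b) ^ 2 + 12 * c ^ 2 = (a + 3 * b) ^ 2 ∧
    7 * (-4 * c ^ 2 * w / ((a - 3 * b) ^ 2 + 12 * c ^ 2)) ^ 2
      + 8 * ((a - 3 * b) * c * w / ((a - 3 * b) ^ 2 + 12 * c ^ 2)) ^ 2
      + w ^ 2
      = ((a ^ 2 + 9 * b ^ 2 + 10 * c ^ 2) ^ 2 / (a + 3 * b) ^ 4) * w ^ 2 ∧
    (w - (-4 * c ^ 2 * w / ((a - 3 * b) ^ 2 + 12 * c ^ 2))) ^ 2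
      = ((a ^ 2 + 9 * b ^ 2 + 10 * c ^ 2) ^ 2 / (a + 3 * b) ^ 4) * w ^ 2 := by
  have hD : (a - 3*b)^2 + 12*c^2 = (a+3*b)^2 := by linear_combination (-12)*habc
  have hs : (a + 3*b)^2 ≠ 0 := pow_ne_zero _ hab
  have hkey : a^2 + 9*b^2 + 10*c^2 = (a+3*b)^2 + 4*c^2 := by
    linear_combination (-6)*habc
  have hnum : 112*(c^2)^2 + 8*(a-3*b)^2*c^2 + ((a+3*b)^2)^2
      = ((a+3*b)^2 + 4*c^2)^2 := by linear_combination (-96)*c^2*habc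
  have h4 : (a+3*b)^4 = ((a+3*b)^2)^2 := by ring
  refine ⟨hD, ?_, ?_⟩ <;> rw [hD, hkey, h4]
  · have h1 : 7 * (-4 * c ^ 2 * w / (a+3*b)^2) ^ 2
        + 8 * ((a - 3 * b) * c * w / (a+3*b)^2) ^ 2 + w ^ 2
        = (112*(c^2)^2 + 8*(a-3*b)^2*c^2 + ((a+3*b)^2)^2) * w^2 / ((a+3*b)^2)^2 := by
      field_simp; ring
    rw [h1, hnum, div_mul_eq_mul_div]
  · have h1 : (w - (-4 * c ^ 2 * w / (a+3*b)^2))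
        = ((a+3*b)^2 + 4*c^2) * w / (a+3*b)^2 := by field_simp; ring
    rw [h1, div_pow, div_mul_eq_mul_div]
    congr 1; ring
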